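/- Let (Ω, 𝒜, P) be a probability space, X : Ω → 𝒳 a measurable map into a measurable space 𝒳, and 𝒢 = σ(X) the σ-algebra generated by X. Let T : Ω → ℝ be measurable with T ∈ {0,1} almost surely, let Y₀, Y₁ : Ω → ℝ be integrable with Y₀·T, Y₁·T integrable, and define the observed outcome Y = T·Y₁ + (1−T)·Y₀. Assume the pair (Y₀, Y₁) is conditionally independent of T given 𝒢, and that there exists ε > 0 with ε < E[T | 𝒢] < 1 − ε almost surely. Then the conditional average treatment effect is identified: almost surely, E[Y₁ − Y₀ | 𝒢] = E[Y·T | 𝒢]/E[T | 𝒢] − E[Y·(1−T) | 𝒢]/(1 − E[T | 𝒢]). -/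

import Mathlib

open MeasureTheory ProbabilityTheory MeasurableSpace Set

section Aux

variable {Ω : Type*} {m' : MeasurableSpace Ω} {mΩ : MeasurableSpace Ω} [StandardBorelSpace Ω]
  [Nonempty Ω] {hm' : m' ≤ mΩ} {μ : Measure Ω} [IsProbabilityMeasure μ]

lemma aux_kernel_null {N : Set Ω} (hN : MeasurableSet N) (hN0 : μ N = 0) :
    ∀ᵐ a ∂(μ.trim hm'), condExpKernel μ m' a N = 0 := by
  have h1 : (fun ω => (condExpKernel μ m' ω N).toReal) =ᵐ[μ.trim hm'] μ⟦N | m'⟧ :=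
    condExpKernel_ae_eq_trim_condExp hm' hN
  have h2 : (μ⟦N | m'⟧) =ᵐ[μ] 0 := by
    have hind : (N.indicator (fun _ => (1 : ℝ))) =ᵐ[μ] 0 := by
      have : ∀ᵐ ω ∂μ, ω ∉ N := by
        rw [← measure_eq_zero_iff_ae_notMem]; exact hN0
      filter_upwards [this] with ω hω
      simp [Set.indicator_of_notMem hω]
    exact (condExp_congr_ae hind).trans (by rw [condExp_zero])
  have h2' : (μ⟦N | m'⟧) =ᵐ[μ.trim hm'] 0 :=
    (StronglyMeasurable.ae_eq_trim_iff hm' stronglyMeasurable_condExp stronglyMeasurable_const).mpr h2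
  filter_upwards [h1, h2'] with a ha hb
  have : (condExpKernel μ m' a N).toReal = 0 := by
    rw [ha]; exact hb
  have hne : condExpKernel μ m' a N ≠ ⊤ := measure_ne_top _ _
  exact (ENNReal.toReal_eq_zero_iff _).mp this |>.resolve_right hne

lemma aux_ae_eq_kernel {β : Type*} {f f' : Ω → β} (h : f =ᵐ[μ] f') :
    ∀ᵐ a ∂(μ.trim hm'), f =ᵐ[condExpKernel μ m' a] f' := by
  set N := toMeasurable μ {ω | ¬ f ω = f' ω} with hNdef
  have hN0 : μ N = 0 := by
    rw [measure_toMeasurable]; exact h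
  filter_upwards [aux_kernel_null (measurableSet_toMeasurable μ _) hN0] with a ha
  rw [Filter.EventuallyEq, ae_iff]
  exact measure_mono_null (subset_toMeasurable μ _) ha

lemma aux_condIndepFun_congr {β γ : Type*} [MeasurableSpace β] [MeasurableSpace γ]
    {f f' : Ω → β} {g : Ω → γ} (h : CondIndepFun m' hm' f g μ) (hff' : f =ᵐ[μ] f') :
    CondIndepFun m' hm' f' g μ :=
  Kernel.IndepFun.congr' h (aux_ae_eq_kernel hff')
    (Filter.Eventually.of_forall fun _ => Filter.EventuallyEq.rfl)

lemma aux_ae_indepFun {f g : Ω → ℝ} (hf : Measurable f) (hg : Measurable g)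
    (h : CondIndepFun m' hm' f g μ) :
    ∀ᵐ ω ∂μ, IndepFun f g (condExpKernel μ m' ω) := by
  have h' : ∀ᵐ a ∂μ, ∀ q r : ℚ,
      condExpKernel μ m' a (f ⁻¹' Iic (q : ℝ) ∩ g ⁻¹' Iic (r : ℝ))
        = condExpKernel μ m' a (f ⁻¹' Iic (q : ℝ)) * condExpKernel μ m' a (g ⁻¹' Iic (r : ℝ)) := by
    rw [ae_all_iff]; intro q; rw [ae_all_iff]; intro r
    exact ae_of_ae_trim hm'
      (h _ _ ⟨Iic (q : ℝ), measurableSet_Iic, rfl⟩ ⟨Iic (r : ℝ), measurableSet_Iic, rfl⟩)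
  filter_upwards [h'] with a ha
  have hgen : (inferInstance : MeasurableSpace ℝ)
      = MeasurableSpace.generateFrom (⋃ q : ℚ, {Iic (q : ℝ)}) :=
    Real.borel_eq_generateFrom_Iic_rat
  have hpi : IsPiSystem (⋃ q : ℚ, {Iic (q : ℝ)}) := Real.isPiSystem_Iic_rat
  have hindep : Indep (MeasurableSpace.comap f inferInstance)
      (MeasurableSpace.comap g inferInstance) (condExpKernel μ m' a) := by
    refine IndepSets.indep (hf.comap_le) (hg.comap_le) (hpi.comap f) (hpi.comap g) ?_ ?_ ?_
    · rw [hgen, MeasurableSpace.comap_generateFrom]; rfl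
    · rw [hgen, MeasurableSpace.comap_generateFrom]; rfl
    · intro t1 t2 ht1 ht2
      simp only [ae_dirac_eq, Filter.eventually_pure, Kernel.const_apply]
      obtain ⟨s1, hs1, rfl⟩ := ht1
      obtain ⟨s2, hs2, rfl⟩ := ht2
      simp only [mem_iUnion, mem_singleton_iff] at hs1 hs2
      obtain ⟨q, rfl⟩ := hs1
      obtain ⟨r, rfl⟩ := hs2
      exact ha q r
  exact hindep

lemma aux_condexp_mul {f g : Ω → ℝ} (hf : Measurable f) (hg : Measurable g)
    (h : CondIndepFun m' hm' f g μ) (hfi : Integrable f μ) (hgi : Integrable g μ)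
    (hfgi : Integrable (fun ω => f ω * g ω) μ) :
    μ[fun ω => f ω * g ω | m'] =ᵐ[μ] fun ω => (μ[f | m']) ω * (μ[g | m']) ω := by
  have h1 := condExp_ae_eq_integral_condExpKernel hm' hfgi
  have h2 := condExp_ae_eq_integral_condExpKernel hm' hfi
  have h3 := condExp_ae_eq_integral_condExpKernel hm' hgi
  have h4 : ∀ᵐ ω ∂μ, Integrable f (condExpKernel μ m' ω) := hfi.condExpKernel_ae
  have h5 : ∀ᵐ ω ∂μ, Integrable g (condExpKernel μ m' ω) := hgi.condExpKernel_ae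
  have h6 := aux_ae_indepFun (hm' := hm') hf hg h
  filter_upwards [h1, h2, h3, h4, h5, h6] with ω e1 e2 e3 i4 i5 ind
  rw [e1, e2, e3]
  have := ind.integral_mul_eq_mul_integral i4.1 i5.1
  simpa [Pi.mul_apply] using this

end Aux

/-- The σ-algebra generated by a map `X`. -/
abbrev sigmaGen {Ω 𝒳 : Type*} [MeasurableSpace 𝒳] (X : Ω → 𝒳) : MeasurableSpace Ω :=
  MeasurableSpace.comap X inferInstance

/-- **Identification of the conditional average treatment effect.**
Under conditional ignorability of `(Y₀, Y₁)` and `T` given `σ(X)` and treatment positivity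
`ε < E[T | σ(X)] < 1 - ε` a.s., with observed outcome `Y = T·Y₁ + (1-T)·Y₀`, the CATE is
identified: `E[Y₁ - Y₀ | σ(X)] = E[Y·T | σ(X)]/E[T | σ(X)] - E[Y·(1-T) | σ(X)]/(1 - E[T | σ(X)])`
almost surely. -/
theorem cate_identification
    {Ω 𝒳 : Type*} [MeasurableSpace Ω] [StandardBorelSpace Ω] [Nonempty Ω]
    [MeasurableSpace 𝒳]
    (P : Measure Ω) [IsProbabilityMeasure P]
    (X : Ω → 𝒳) (hX : Measurable X)
    (T Y₀ Y₁ : Ω → ℝ) (hT : Measurable T)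
    (hT01 : ∀ᵐ ω ∂P, T ω = 0 ∨ T ω = 1)
    (hY₀ : Integrable Y₀ P) (hY₁ : Integrable Y₁ P)
    (hY₀T : Integrable (fun ω => Y₀ ω * T ω) P)
    (hY₁T : Integrable (fun ω => Y₁ ω * T ω) P)
    (Y : Ω → ℝ) (hYdef : ∀ ω, Y ω = T ω * Y₁ ω + (1 - T ω) * Y₀ ω)
    (hindep : CondIndepFun (sigmaGen X) hX.comap_le (fun ω => (Y₀ ω, Y₁ ω)) T P)
    (ε : ℝ) (hε : 0 < ε)
    (hpos : ∀ᵐ ω ∂P, ε < (P[T | sigmaGen X]) ω ∧ (P[T | sigmaGen X]) ω < 1 - ε) :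
    P[fun ω => Y₁ ω - Y₀ ω | sigmaGen X]
      =ᵐ[P] fun ω =>
        (P[fun ω' => Y ω' * T ω' | sigmaGen X]) ω / (P[T | sigmaGen X]) ω
          - (P[fun ω' => Y ω' * (1 - T ω') | sigmaGen X]) ω
              / (1 - (P[T | sigmaGen X]) ω) := by
  have hm' : sigmaGen X ≤ ‹MeasurableSpace Ω› := hX.comap_le
  -- measurable versions of Y₀ and Y₁
  set Y₀' := hY₀.1.mk Y₀ with hY₀'def
  set Y₁' := hY₁.1.mk Y₁ with hY₁'def
  have hae₀ : Y₀ =ᵐ[P] Y₀' := hY₀.1.ae_eq_mk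
  have hae₁ : Y₁ =ᵐ[P] Y₁' := hY₁.1.ae_eq_mk
  have hY₀'m : Measurable Y₀' := hY₀.1.stronglyMeasurable_mk.measurable
  have hY₁'m : Measurable Y₁' := hY₁.1.stronglyMeasurable_mk.measurable
  -- conditional independence of the coordinates with T
  have hind₀ : CondIndepFun (sigmaGen X) hX.comap_le Y₀ T P :=
    hindep.comp measurable_fst measurable_id
  have hind₁ : CondIndepFun (sigmaGen X) hX.comap_le Y₁ T P :=
    hindep.comp measurable_snd measurable_id
  have hind₀' : CondIndepFun (sigmaGen X) hX.comap_le Y₀' T P :=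
    aux_condIndepFun_congr hind₀ hae₀
  have hind₁' : CondIndepFun (sigmaGen X) hX.comap_le Y₁' T P :=
    aux_condIndepFun_congr hind₁ hae₁
  -- integrability of T
  have hTint : Integrable T P := by
    refine Integrable.mono' (integrable_const (1 : ℝ)) hT.aestronglyMeasurable ?_
    filter_upwards [hT01] with ω h
    rcases h with h | h <;> simp [h]
  -- factorization for Y₀ * T
  have key₀ : P[fun ω => Y₀ ω * T ω | sigmaGen X]
      =ᵐ[P] fun ω => (P[Y₀ | sigmaGen X]) ω * (P[T | sigmaGen X]) ω := by
    have hmulae : (fun ω => Y₀ ω * T ω) =ᵐ[P] fun ω => Y₀' ω * T ω := by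
      filter_upwards [hae₀] with ω h; rw [h]
    have h1 : P[fun ω => Y₀' ω * T ω | sigmaGen X]
        =ᵐ[P] fun ω => (P[Y₀' | sigmaGen X]) ω * (P[T | sigmaGen X]) ω :=
      aux_condexp_mul (hm' := hm') hY₀'m hT hind₀' (hY₀.congr hae₀) hTint (hY₀T.congr hmulae)
    have h2 : P[Y₀' | sigmaGen X] =ᵐ[P] P[Y₀ | sigmaGen X] := condExp_congr_ae hae₀.symm
    refine ((condExp_congr_ae hmulae).trans h1).trans ?_
    filter_upwards [h2] with ω h; rw [h]
  -- factorization for Y₁ * T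
  have key₁ : P[fun ω => Y₁ ω * T ω | sigmaGen X]
      =ᵐ[P] fun ω => (P[Y₁ | sigmaGen X]) ω * (P[T | sigmaGen X]) ω := by
    have hmulae : (fun ω => Y₁ ω * T ω) =ᵐ[P] fun ω => Y₁' ω * T ω := by
      filter_upwards [hae₁] with ω h; rw [h]
    have h1 : P[fun ω => Y₁' ω * T ω | sigmaGen X]
        =ᵐ[P] fun ω => (P[Y₁' | sigmaGen X]) ω * (P[T | sigmaGen X]) ω :=
      aux_condexp_mul (hm' := hm') hY₁'m hT hind₁' (hY₁.congr hae₁) hTint (hY₁T.congr hmulae)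
    have h2 : P[Y₁' | sigmaGen X] =ᵐ[P] P[Y₁ | sigmaGen X] := condExp_congr_ae hae₁.symm
    refine ((condExp_congr_ae hmulae).trans h1).trans ?_
    filter_upwards [h2] with ω h; rw [h]
  -- observed outcome identities
  have hYT : (fun ω => Y ω * T ω) =ᵐ[P] fun ω => Y₁ ω * T ω := by
    filter_upwards [hT01] with ω h
    rw [hYdef ω]; rcases h with h | h <;> simp [h]
  have hY1T : (fun ω => Y ω * (1 - T ω)) =ᵐ[P] fun ω => Y₀ ω - Y₀ ω * T ω := by
    filter_upwards [hT01] with ω h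
    rw [hYdef ω]; rcases h with h | h <;> simp [h]
  -- conditional expectations of observed quantities
  have cYT : P[fun ω' => Y ω' * T ω' | sigmaGen X]
      =ᵐ[P] fun ω => (P[Y₁ | sigmaGen X]) ω * (P[T | sigmaGen X]) ω :=
    (condExp_congr_ae hYT).trans key₁
  have cY1T : P[fun ω' => Y ω' * (1 - T ω') | sigmaGen X]
      =ᵐ[P] fun ω => (P[Y₀ | sigmaGen X]) ω * (1 - (P[T | sigmaGen X]) ω) := by
    have hsub : P[fun ω => Y₀ ω - Y₀ ω * T ω | sigmaGen X]
        =ᵐ[P] P[Y₀ | sigmaGen X] - P[fun ω => Y₀ ω * T ω | sigmaGen X] :=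
      condExp_sub hY₀ hY₀T _
    refine ((condExp_congr_ae hY1T).trans hsub).trans ?_
    filter_upwards [key₀] with ω h
    simp only [Pi.sub_apply]
    rw [h]; ring
  have csub : P[fun ω => Y₁ ω - Y₀ ω | sigmaGen X]
      =ᵐ[P] P[Y₁ | sigmaGen X] - P[Y₀ | sigmaGen X] := condExp_sub hY₁ hY₀ _
  -- conclusion
  filter_upwards [csub, cYT, cY1T, hpos] with ω h1 h2 h3 hp
  obtain ⟨hpl, hpu⟩ := hp
  have hp0 : (P[T | sigmaGen X]) ω ≠ 0 := ne_of_gt (hε.trans hpl)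
  have hq0 : 1 - (P[T | sigmaGen X]) ω ≠ 0 := by
    have : (P[T | sigmaGen X]) ω < 1 := hpu.trans_le (by linarith)
    intro hc; linarith
  rw [h1, h2, h3, mul_div_assoc, div_self hp0, mul_div_assoc, div_self hq0]
  simp [Pi.sub_apply]
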